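/- Let Σ be either ℝ² or the open half-plane {(x,y) ∈ ℝ² : y > 0}, and let G be a subgroup of O(2) whose action preserves Σ. Let u be a nontrivial C² solution of −Δu = u in Σ, satisfying u = 0 on ∂Σ when Σ is the half-plane. Then the G-Morse index of u is infinite: for every m ∈ ℕ there exist m linearly independent G-invariant functions v₁, …, v_m ∈ C_c^∞(Σ) with ∫_Σ (|∇v_i|² − v_i²) dx < 0 for each i = 1, …, m. -/

import Mathlib

open Real MeasureTheory Metric Set Asymptotics

noncomputable section

abbrev Plane : Type := EuclideanSpace ℝ (Fin 2)

/-- The Laplacian of a function on the plane. -/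
def lap (u : Plane → ℝ) (x : Plane) : ℝ :=
  ∑ i : Fin 2,
    fderiv ℝ (fun y => fderiv ℝ u y (EuclideanSpace.single i 1)) x (EuclideanSpace.single i 1)

/-- The open upper half-plane. -/
def halfPlane : Set Plane := {x : Plane | 0 < x 1}

open Pointwise

namespace MorseIndexAux

/-- A fixed bump function on `ℝ`: equal to `1` on `[-1/2,1/2]`, supported in `(-1,1)`. -/
def bb : ContDiffBump (0:ℝ) := ⟨1/2, 1, by norm_num, by norm_num⟩

lemma bb_one : bb 0 = 1 := bb.one_of_mem_closedBall (by simp [bb])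

lemma bb_zero {s : ℝ} (h : 1 ≤ |s|) : bb s = 0 :=
  bb.zero_of_le_dist (by simpa [Real.dist_eq, bb] using h)

lemma bb_lt {s : ℝ} (h : bb s ≠ 0) : |s| < 1 := by
  have := Function.mem_support.2 h
  rw [bb.support_eq] at this
  simpa [Real.dist_eq, bb] using this

lemma bb_sm : ContDiff ℝ (⊤:ℕ∞) (fun s : ℝ => bb s) := bb.contDiff

lemma norm_sq_coords (y : Plane) : ‖y‖^2 = (y 0)^2 + (y 1)^2 := by
  rw [EuclideanSpace.norm_eq, Real.sq_sqrt (by positivity)]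
  simp [Fin.sum_univ_two, sq_abs]

/-- Rescaling of a test function. -/
def scale (R : ℝ) (F : Plane → ℝ) : Plane → ℝ := fun x => F (R⁻¹ • x)

lemma scale_contDiff {F : Plane → ℝ} (hF : ContDiff ℝ (⊤:ℕ∞) F) (R : ℝ) :
    ContDiff ℝ (⊤:ℕ∞) (scale R F) := hF.comp (contDiff_id.const_smul R⁻¹)

lemma scale_hcs {F : Plane → ℝ} (hcs : HasCompactSupport F) {R : ℝ} (hR : R ≠ 0) :
    HasCompactSupport (scale R F) := by
  apply HasCompactSupport.intro (hcs.smul R)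
  intro x hx
  by_contra h
  exact hx ⟨R⁻¹ • x, subset_tsupport _ h, smul_inv_smul₀ hR x⟩

lemma fderiv_scale {F : Plane → ℝ} (hF : ContDiff ℝ (⊤:ℕ∞) F) (R : ℝ) (x : Plane) :
    fderiv ℝ (scale R F) x = R⁻¹ • fderiv ℝ F (R⁻¹ • x) := by
  have h1 : HasFDerivAt (fun y : Plane => R⁻¹ • y)
      (R⁻¹ • ContinuousLinearMap.id ℝ Plane) x := by
    exact (hasFDerivAt_id x).const_smul R⁻¹
  have h2 : HasFDerivAt F (fderiv ℝ F (R⁻¹ • x)) (R⁻¹ • x) :=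
    (hF.differentiable (by simp) (R⁻¹ • x)).hasFDerivAt
  have h3 : HasFDerivAt (scale R F)
      ((fderiv ℝ F (R⁻¹ • x)).comp (R⁻¹ • ContinuousLinearMap.id ℝ Plane)) x := h2.comp x h1
  rw [h3.fderiv]
  ext z
  simp

lemma integrable_aux {w : Plane → ℝ} (hw : ContDiff ℝ (⊤:ℕ∞) w) (hc : HasCompactSupport w) :
    Integrable (fun x => ‖fderiv ℝ w x‖^2) ∧ Integrable (fun x => (w x)^2) := by
  constructor
  · have hc1 : Continuous (fun x => ‖fderiv ℝ w x‖^2) := (hw.continuous_fderiv (by simp)).norm.pow 2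
    have hc2 : HasCompactSupport (fun x => ‖fderiv ℝ w x‖^2) :=
      ((hc.fderiv ℝ).norm).comp_left (g := fun t : ℝ => t^2) (by simp)
    exact hc1.integrable_of_hasCompactSupport hc2
  · have hc1 : Continuous (fun x => (w x)^2) := hw.continuous.pow 2
    have hc2 : HasCompactSupport (fun x => (w x)^2) :=
      hc.comp_left (g := fun t : ℝ => t^2) (by simp)
    exact hc1.integrable_of_hasCompactSupport hc2

lemma integral_scale {F : Plane → ℝ} (hF : ContDiff ℝ (⊤:ℕ∞) F) (hcs : HasCompactSupport F)
    {R : ℝ} (hR : 0 < R) :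
    ∫ x, (‖fderiv ℝ (scale R F) x‖^2 - (scale R F x)^2) =
      (∫ x, ‖fderiv ℝ F x‖^2) - R^2 * ∫ x, (F x)^2 := by
  have hv := scale_contDiff hF R
  have hvc := scale_hcs hcs hR.ne'
  obtain ⟨I1, I2⟩ := integrable_aux hv hvc
  rw [integral_sub I1 I2]
  have e2 : ∫ x, (scale R F x)^2 = R^2 * ∫ x, (F x)^2 := by
    have := Measure.integral_comp_inv_smul_of_nonneg (volume : Measure Plane)
      (fun y => (F y)^2) hR.le
    simpa [scale, finrank_euclideanSpace_fin, smul_eq_mul] using this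
  have e1 : ∫ x, ‖fderiv ℝ (scale R F) x‖^2 = ∫ x, ‖fderiv ℝ F x‖^2 := by
    have hp : ∀ x, ‖fderiv ℝ (scale R F) x‖^2 = (R⁻¹)^2 * ‖fderiv ℝ F (R⁻¹ • x)‖^2 := by
      intro x
      rw [fderiv_scale hF R x, norm_smul]
      simp [mul_pow, abs_of_pos (inv_pos.2 hR), sq_abs]
    simp_rw [hp]
    rw [integral_const_mul]
    have := Measure.integral_comp_inv_smul_of_nonneg (volume : Measure Plane)
      (fun y => ‖fderiv ℝ F y‖^2) hR.le
    rw [this, finrank_euclideanSpace_fin, smul_eq_mul]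
    field_simp
  rw [e1, e2]

/-- Master lemma: given a good compactly supported profile function `F`, the rescaled
functions `scale R F` for suitable `R`'s provide arbitrarily many linearly independent
`G`-invariant test functions with negative energy. -/
lemma master (Sig : Set Plane) (G : Subgroup (Plane ≃ₗᵢ[ℝ] Plane))
    (F : Plane → ℝ) (q : Plane)
    (hFsm : ContDiff ℝ (⊤:ℕ∞) F) (hFcs : HasCompactSupport F)
    (hFq : F q = 1)
    (hFzero : ∀ t : ℝ, 0 < t → (4 ≤ t ∨ t ≤ 4⁻¹) → F (t • q) = 0)
    (hinv : ∀ g ∈ G, ∀ c : ℝ, 0 < c → ∀ x : Plane, F (c • (g x)) = F (c • x))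
    (hsub : ∀ R : ℝ, 0 < R → tsupport (scale R F) ⊆ Sig)
    (hSigInt : ∀ w : Plane → ℝ, (∀ x ∉ Sig, w x = 0) → ∫ x in Sig, w x = ∫ x, w x) :
    ∀ m : ℕ, ∃ v : Fin m → (Plane → ℝ), LinearIndependent ℝ v ∧
      ∀ i : Fin m,
        ((∀ n : ℕ, ContDiff ℝ n (v i)) ∧ HasCompactSupport (v i) ∧ tsupport (v i) ⊆ Sig) ∧
        (∀ g ∈ G, ∀ x : Plane, v i (g x) = v i x) ∧
        (∫ x in Sig, (‖fderiv ℝ (v i) x‖ ^ 2 - (v i x) ^ 2)) < 0 := by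
  intro m
  set A := ∫ x, ‖fderiv ℝ F x‖^2 with hA
  set B := ∫ x, (F x)^2 with hBdef
  have hB : 0 < B := by
    have hFc := hFsm.continuous
    refine (integral_pos_iff_support_of_nonneg (fun x => sq_nonneg (F x))
      ((show Continuous (fun x => (F x)^2) from hFc.pow 2).integrable_of_hasCompactSupport
        (show HasCompactSupport (fun x => (F x)^2) from
          hFcs.comp_left (g := fun t : ℝ => t^2) (by simp)))).2 ?_
    have hs : Function.support (fun x => (F x)^2) = Function.support F := by
      ext x; simp [Function.mem_support, pow_eq_zero_iff]
    rw [hs]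
    exact hFc.isOpen_support.measure_pos volume
      ⟨q, Function.mem_support.2 (by rw [hFq]; norm_num)⟩
  set R0 : ℝ := max 1 (A / B + 1) with hR0def
  have hR01 : 1 ≤ R0 := le_max_left _ _
  set Rf : Fin m → ℝ := fun i => R0 * 4 ^ (i : ℕ) with hRf
  have hRf1 : ∀ i, 1 ≤ Rf i := fun i => by
    have : (1:ℝ) ≤ 4 ^ (i:ℕ) := one_le_pow₀ (by norm_num)
    calc (1:ℝ) ≤ R0 := hR01
    _ ≤ R0 * 4 ^ (i:ℕ) := le_mul_of_one_le_right (by linarith) this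
  have hRfpos : ∀ i, 0 < Rf i := fun i => lt_of_lt_of_le one_pos (hRf1 i)
  refine ⟨fun i => scale (Rf i) F, ?_, ?_⟩
  · -- linear independence
    rw [Fintype.linearIndependent_iff]
    intro c hc i
    have hci := congrFun hc (Rf i • q)
    have key : ∀ j : Fin m, scale (Rf j) F (Rf i • q) = if j = i then 1 else 0 := by
      intro j
      have : scale (Rf j) F (Rf i • q) = F (((Rf j)⁻¹ * Rf i) • q) := by
        rw [scale, smul_smul]
      rw [this]
      by_cases hji : j = i
      · subst hji
        rw [inv_mul_cancel₀ (hRfpos j).ne', one_smul, hFq, if_pos rfl]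
      rw [if_neg hji]
      set t := (Rf j)⁻¹ * Rf i with ht
      have htpos : 0 < t := mul_pos (inv_pos.2 (hRfpos j)) (hRfpos i)
      have htval : t = (4:ℝ) ^ (i:ℕ) / 4 ^ (j:ℕ) := by
        rw [ht, hRf]
        field_simp
      refine hFzero t htpos ?_
      rcases lt_or_gt_of_ne (fun h : (i:ℕ) = (j:ℕ) => hji (Fin.ext h.symm)) with h | h
      · right
        rw [htval, div_le_iff₀ (by positivity)]
        calc (4:ℝ) ^ (i:ℕ) ≤ 4 ^ ((j:ℕ) - 1) := by
              apply pow_le_pow_right₀ (by norm_num); omega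
        _ = 4⁻¹ * ((4:ℝ)^((j:ℕ)-1) * 4) := by ring
        _ ≤ 4⁻¹ * 4 ^ (j:ℕ) := by
              rw [mul_le_mul_iff_of_pos_left (by norm_num : (0:ℝ) < 4⁻¹)]
              rw [show ((4:ℝ)^((j:ℕ)-1) * 4) = 4 ^ ((j:ℕ)-1+1) by ring]
              apply pow_le_pow_right₀ (by norm_num); omega
      · left
        rw [htval, le_div_iff₀ (by positivity)]
        calc (4:ℝ) * 4 ^ (j:ℕ) = 4 ^ ((j:ℕ)+1) := by ring
        _ ≤ 4 ^ (i:ℕ) := by apply pow_le_pow_right₀ (by norm_num); omega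
    rw [Finset.sum_apply] at hci
    simp only [Pi.smul_apply, smul_eq_mul, key] at hci
    rw [Finset.sum_eq_single i (fun j _ hj => by rw [if_neg hj, mul_zero])
      (fun h => absurd (Finset.mem_univ i) h)] at hci
    simpa using hci
  · intro i
    have hv := scale_contDiff hFsm (Rf i)
    have hvc := scale_hcs hFcs (hRfpos i).ne'
    have hts := hsub (Rf i) (hRfpos i)
    refine ⟨⟨fun n => hv.of_le (mod_cast le_top), hvc, hts⟩, ?_, ?_⟩
    · intro g hg x
      exact hinv g hg (Rf i)⁻¹ (inv_pos.2 (hRfpos i)) x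
    · have hvanish : ∀ x ∉ Sig, ‖fderiv ℝ (scale (Rf i) F) x‖ ^ 2 - (scale (Rf i) F x)^2 = 0 := by
        intro x hx
        have hxt : x ∉ tsupport (scale (Rf i) F) := fun h => hx (hts h)
        have h1 : scale (Rf i) F x = 0 := image_eq_zero_of_notMem_tsupport hxt
        have h2 : fderiv ℝ (scale (Rf i) F) x = 0 := by
          by_contra h
          exact hxt (support_fderiv_subset ℝ (Function.mem_support.2 h))
        rw [h1, h2]; simp
      rw [hSigInt _ hvanish, integral_scale hFsm hFcs (hRfpos i)]
      have h1 : A / B + 1 ≤ R0 := le_max_right _ _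
      have h2 : R0 ≤ Rf i := by
        have : (1:ℝ) ≤ 4 ^ (i:ℕ) := one_le_pow₀ (by norm_num)
        calc R0 = R0 * 1 := (mul_one _).symm
        _ ≤ R0 * 4 ^ (i:ℕ) := by
            apply mul_le_mul_of_nonneg_left this (by linarith)
      have h3 : A / B < Rf i ^ 2 := by nlinarith [hRf1 i]
      have h4 := (div_lt_iff₀ hB).1 h3
      linarith

/-! ### Geometry of isometries preserving the half-plane -/

section Geom
variable (G : Subgroup (Plane ≃ₗᵢ[ℝ] Plane))

lemma coord1_eq (hG : ∀ g ∈ G, (⇑g) '' halfPlane = halfPlane)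
    (g : Plane ≃ₗᵢ[ℝ] Plane) (hg : g ∈ G) (x : Plane) :
    (g x) 1 = x 1 := by
  have hfwd : ∀ y : Plane, 0 < y 1 → 0 < (g y) 1 := fun y hy => by
    have h := mem_image_of_mem (⇑g) (show y ∈ halfPlane from hy)
    rw [hG g hg] at h
    exact h
  have hbwd : ∀ y : Plane, 0 < (g y) 1 → 0 < y 1 := fun y hy => by
    have h2 := hG g⁻¹ (inv_mem hg)
    have h := mem_image_of_mem (⇑g⁻¹) (show g y ∈ halfPlane from hy)
    rw [h2] at h
    rwa [LinearIsometryEquiv.coe_inv, g.symm_apply_apply] at h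
  have hzero1 : ∀ y : Plane, y 1 = 0 → (g y) 1 = 0 := by
    intro y hy
    have h1 : ¬ 0 < (g y) 1 := fun h => by have := hbwd y h; linarith
    have h2 : ¬ 0 < (g (-y)) 1 := fun h => by
      have := hbwd _ h
      have hny : (-y) 1 = -(y 1) := rfl
      rw [hny, hy] at this; linarith
    rw [map_neg] at h2
    have hng : (-(g y)) 1 = -((g y) 1) := rfl
    rw [hng] at h2
    push_neg at h1 h2
    linarith
  set e0 : Plane := EuclideanSpace.single 0 1 with he0
  set e1 : Plane := EuclideanSpace.single 1 1 with he1
  have hge0 : (g e0) 1 = 0 := hzero1 e0 (by simp [he0, EuclideanSpace.single_apply])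
  have hge1pos : 0 < (g e1) 1 := hfwd e1 (by simp [he1, EuclideanSpace.single_apply])
  have hne0 : ‖g e0‖ = 1 := by rw [g.norm_map, he0, EuclideanSpace.norm_single]; norm_num
  have hne1 : ‖g e1‖ = 1 := by rw [g.norm_map, he1, EuclideanSpace.norm_single]; norm_num
  have hb0 : (g e0 0)^2 = 1 := by
    have := norm_sq_coords (g e0)
    rw [hne0, hge0] at this
    nlinarith
  have horth : inner ℝ (g e0) (g e1) = (0:ℝ) := by
    rw [g.inner_map_map]
    simp [he0, he1, PiLp.inner_apply, EuclideanSpace.single_apply, Fin.sum_univ_two]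
  have ha0 : (g e1) 0 = 0 := by
    rw [PiLp.inner_apply, Fin.sum_univ_two] at horth
    simp only [RCLike.inner_apply, conj_trivial] at horth
    have hb0ne : g e0 0 ≠ 0 := fun h => by rw [h] at hb0; norm_num at hb0
    rw [hge0] at horth
    simp at horth
    rcases horth with h | h
    · exact h
    · exact absurd h hb0ne
  have ha1 : (g e1) 1 = 1 := by
    have := norm_sq_coords (g e1)
    rw [hne1, ha0] at this
    nlinarith
  have hge1 : g e1 = e1 := by
    ext i
    fin_cases i
    · show g e1 0 = e1 0
      rw [ha0]; simp [he1, EuclideanSpace.single_apply]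
    · show g e1 1 = e1 1
      rw [ha1]; simp [he1, EuclideanSpace.single_apply]
  have := g.inner_map_map x e1
  rw [hge1, PiLp.inner_apply, PiLp.inner_apply, Fin.sum_univ_two, Fin.sum_univ_two] at this
  simp only [RCLike.inner_apply, conj_trivial] at this
  simpa [he1, EuclideanSpace.single_apply] using this

lemma coord0_sq (hG : ∀ g ∈ G, (⇑g) '' halfPlane = halfPlane)
    (g : Plane ≃ₗᵢ[ℝ] Plane) (hg : g ∈ G) (x : Plane) :
    ((g x) 0)^2 = (x 0)^2 := by
  have hn : ‖g x‖ = ‖x‖ := g.norm_map x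
  have h1 := norm_sq_coords (g x)
  have h2 := norm_sq_coords x
  have h3 := coord1_eq G hG g hg x
  rw [hn, h3] at h1
  linarith
end Geom

/-! ### The profile function for the full plane -/

def Ffull : Plane → ℝ := fun x => bb ((‖x‖^2 - 7)^2)
def qfull : Plane := EuclideanSpace.single 0 (Real.sqrt 7)

lemma Ffull_sm : ContDiff ℝ (⊤:ℕ∞) Ffull := by
  exact bb.contDiff.comp (((contDiff_norm_sq ℝ (E := Plane)).sub contDiff_const).pow 2)

lemma Ffull_cs : HasCompactSupport Ffull := by
  apply HasCompactSupport.intro (isCompact_closedBall (0:Plane) 3)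
  intro x hx
  by_contra h
  have h1 := bb_lt h
  rw [abs_of_nonneg (sq_nonneg _)] at h1
  have h2 : ¬ ‖x‖ ≤ 3 := by simpa [dist_eq_norm] using hx
  push_neg at h2
  have h9 : 9 < ‖x‖^2 := by nlinarith [norm_nonneg x]
  nlinarith [sq_nonneg (‖x‖^2 - 9)]

lemma qfull_norm : ‖qfull‖^2 = 7 := by
  rw [qfull, EuclideanSpace.norm_single, norm_eq_abs,
    abs_of_nonneg (Real.sqrt_nonneg _), Real.sq_sqrt (by norm_num)]

lemma Ffull_q : Ffull qfull = 1 := by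
  rw [Ffull, qfull_norm]
  norm_num [bb_one]

lemma Ffull_zero : ∀ t : ℝ, 0 < t → (4 ≤ t ∨ t ≤ 4⁻¹) → Ffull (t • qfull) = 0 := by
  intro t ht hd
  have hn : ‖t • qfull‖^2 = t^2 * 7 := by
    rw [norm_smul, mul_pow, qfull_norm, norm_eq_abs, sq_abs]
  rw [Ffull, hn]
  apply bb_zero
  rw [abs_of_nonneg (sq_nonneg _)]
  rcases hd with h | h
  · have hu : 16 ≤ t^2 := by nlinarith [sq_nonneg (t-4)]
    nlinarith [sq_nonneg (7*t^2 - 112)]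
  · have hu : t^2 ≤ 1/16 := by nlinarith
    nlinarith [sq_nonneg (7*t^2 - 1)]

lemma Ffull_inv (g : Plane ≃ₗᵢ[ℝ] Plane) (c : ℝ) (x : Plane) :
    Ffull (c • (g x)) = Ffull (c • x) := by
  simp only [Ffull]
  rw [norm_smul, norm_smul, g.norm_map]

/-! ### The profile function for the half-plane -/

def Fhalf : Plane → ℝ := fun x => bb ((x 0)^2) * bb ((x 1 - 3)^2)
def qhalf : Plane := EuclideanSpace.single 1 3

lemma coord_contDiff (i : Fin 2) : ContDiff ℝ (⊤:ℕ∞) (fun x : Plane => x i) := by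
  exact (EuclideanSpace.proj (i) : Plane →L[ℝ] ℝ).contDiff

lemma Fhalf_sm : ContDiff ℝ (⊤:ℕ∞) Fhalf := by
  exact ((bb_sm.comp ((coord_contDiff 0).pow 2)).mul
    (bb_sm.comp (((coord_contDiff 1).sub contDiff_const).pow 2)))

lemma Fhalf_supp {x : Plane} (h : Fhalf x ≠ 0) :
    (x 0)^2 < 1 ∧ (x 1 - 3)^2 < 1 := by
  rw [Fhalf, mul_ne_zero_iff] at h
  constructor
  · have := bb_lt h.1; rwa [abs_of_nonneg (sq_nonneg _)] at this
  · have := bb_lt h.2; rwa [abs_of_nonneg (sq_nonneg _)] at this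

lemma Fhalf_cs : HasCompactSupport Fhalf := by
  apply HasCompactSupport.intro (isCompact_closedBall (0:Plane) 5)
  intro x hx
  by_contra h
  obtain ⟨h1, h2⟩ := Fhalf_supp h
  have h3 : ¬ ‖x‖ ≤ 5 := by simpa [dist_eq_norm] using hx
  have h4 := norm_sq_coords x
  push_neg at h3
  nlinarith [norm_nonneg x, sq_nonneg (‖x‖ - 5), sq_nonneg (x 1 - 4)]

lemma qhalf_coords : qhalf 0 = 0 ∧ qhalf 1 = 3 := by
  constructor <;> simp [qhalf, EuclideanSpace.single_apply]

lemma Fhalf_q : Fhalf qhalf = 1 := by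
  rw [Fhalf, qhalf_coords.1, qhalf_coords.2]
  norm_num [bb_one]

lemma Fhalf_zero : ∀ t : ℝ, 0 < t → (4 ≤ t ∨ t ≤ 4⁻¹) → Fhalf (t • qhalf) = 0 := by
  intro t ht hd
  have hc0 : (t • qhalf) 0 = 0 := by
    rw [PiLp.smul_apply, qhalf_coords.1, smul_eq_mul, mul_zero]
  have hc1 : (t • qhalf) 1 = 3 * t := by
    rw [PiLp.smul_apply, qhalf_coords.2, smul_eq_mul]; ring
  rw [Fhalf, hc0, hc1]
  have : bb ((3 * t - 3)^2) = 0 := by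
    apply bb_zero
    rw [abs_of_nonneg (sq_nonneg _)]
    rcases hd with h | h
    · nlinarith
    · nlinarith
  rw [this, mul_zero]

lemma Fhalf_inv (g : Plane ≃ₗᵢ[ℝ] Plane)
    (h1 : ∀ x : Plane, (g x) 1 = x 1) (h0 : ∀ x : Plane, ((g x) 0)^2 = (x 0)^2)
    (c : ℝ) (x : Plane) : Fhalf (c • (g x)) = Fhalf (c • x) := by
  have e0 : ((c • (g x)) 0)^2 = ((c • x) 0)^2 := by
    rw [PiLp.smul_apply, PiLp.smul_apply, smul_eq_mul, smul_eq_mul, mul_pow, mul_pow, h0]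
  have e1 : (c • (g x)) 1 = (c • x) 1 := by
    rw [PiLp.smul_apply, PiLp.smul_apply, h1]
  simp only [Fhalf]
  rw [e0, e1]

lemma Fhalf_sub {R : ℝ} (hR : 0 < R) : tsupport (scale R Fhalf) ⊆ halfPlane := by
  have hsupp : Function.support (scale R Fhalf) ⊆ {x : Plane | 2 * R ≤ x 1} := by
    intro x hx
    have h2 := (Fhalf_supp hx).2
    have hc : (R⁻¹ • x) 1 = R⁻¹ * x 1 := by rw [PiLp.smul_apply, smul_eq_mul]
    rw [hc] at h2
    have h5 : 2 < R⁻¹ * x 1 := by nlinarith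
    show 2 * R ≤ x 1
    have h6 : R * (R⁻¹ * x 1) = x 1 := by field_simp
    nlinarith [mul_lt_mul_of_pos_left h5 hR]
  have hcl : IsClosed {x : Plane | 2 * R ≤ x 1} :=
    isClosed_le continuous_const (EuclideanSpace.proj (1 : Fin 2)).continuous
  refine (closure_minimal hsupp hcl).trans ?_
  intro x hx
  show 0 < x 1
  have : (0:ℝ) < 2 * R := by linarith
  exact lt_of_lt_of_le this hx

end MorseIndexAux

open MorseIndexAux

theorem infinite_G_morse_index_limit_problem
    (Sig : Set Plane) (hSig : Sig = Set.univ ∨ Sig = halfPlane)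
    (G : Subgroup (Plane ≃ₗᵢ[ℝ] Plane))
    (hG : ∀ g ∈ G, (⇑g) '' Sig = Sig)
    (u : Plane → ℝ) (hreg : ContDiffOn ℝ 2 u Sig)
    (hequ : ∀ x ∈ Sig, - lap u x = u x)
    (hbd : ∀ x ∈ frontier Sig, u x = 0)
    (hnt : ∃ x ∈ Sig, u x ≠ 0) :
    ∀ m : ℕ, ∃ v : Fin m → (Plane → ℝ), LinearIndependent ℝ v ∧
      ∀ i : Fin m,
        ((∀ n : ℕ, ContDiff ℝ n (v i)) ∧ HasCompactSupport (v i) ∧ tsupport (v i) ⊆ Sig) ∧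
        (∀ g ∈ G, ∀ x : Plane, v i (g x) = v i x) ∧
        (∫ x in Sig, (‖fderiv ℝ (v i) x‖ ^ 2 - (v i x) ^ 2)) < 0 := by
  rcases hSig with h | h <;> subst h
  · exact master Set.univ G Ffull qfull Ffull_sm Ffull_cs Ffull_q Ffull_zero
      (fun g _ c _ x => Ffull_inv g c x)
      (fun R _ => Set.subset_univ _)
      (fun w _ => by rw [setIntegral_univ])
  · exact master halfPlane G Fhalf qhalf Fhalf_sm Fhalf_cs Fhalf_q Fhalf_zero
      (fun g hg c _ x => Fhalf_inv g (coord1_eq G hG g hg) (coord0_sq G hG g hg) c x)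
      (fun R hR => Fhalf_sub hR)
      (fun w hw => setIntegral_eq_integral_of_forall_compl_eq_zero hw)

end
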